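/- Let U be a real-valued random variable whose cumulative distribution function F(s) := P(U ≤ s) is Lipschitz continuous with constant C_f ≥ 0 (i.e., the density of U is bounded by C_f). Then for every δ ∈ ℝ, the Knight remainder W(δ) := ∫_0^δ (1{U ≤ z} − 1{U ≤ 0}) dz satisfies E[W(δ)²] ≤ C_f · |δ|³. -/

import Mathlib

open MeasureTheory

lemma knight_aux {Ω : Type*} [MeasurableSpace Ω] (μ : Measure Ω) [IsProbabilityMeasure μ]
    (g : Ω → ℝ → ℝ) (hg : Measurable (Function.uncurry g))
    (a b : ℝ) (hab : a ≤ b)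
    (hbd : ∀ ω z, |g ω z| ≤ 1)
    (h0 : ∀ ω, ∀ z ∈ Set.Ioc a b, 0 ≤ g ω z)
    (Cb : ℝ) (hCb : 0 ≤ Cb)
    (hmean : ∀ z ∈ Set.Ioc a b, ∫ ω, g ω z ∂μ ≤ Cb) :
    ∫ ω, (∫ z in Set.Ioc a b, g ω z) ^ 2 ∂μ ≤ (b - a) * ((b - a) * Cb) := by
  set ν : Measure ℝ := volume.restrict (Set.Ioc a b) with hν
  have hνuniv : ν Set.univ = ENNReal.ofReal (b - a) := by
    simp [hν, Real.volume_Ioc]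
  haveI : IsFiniteMeasure ν := ⟨by rw [hνuniv]; exact ENNReal.ofReal_lt_top⟩
  set W : Ω → ℝ := fun ω => ∫ z, g ω z ∂ν with hW
  have measW : StronglyMeasurable W := hg.stronglyMeasurable.integral_prod_right'
  have hgm : ∀ ω, Measurable (g ω) := fun ω => hg.comp measurable_prodMk_left
  have hgint : ∀ ω, Integrable (g ω) ν := fun ω =>
    (integrable_const (1 : ℝ)).mono' (hgm ω).aestronglyMeasurable
      (Filter.Eventually.of_forall fun z => by simpa using hbd ω z)
  have hWnn : ∀ ω, 0 ≤ W ω := fun ω =>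
    setIntegral_nonneg measurableSet_Ioc (h0 ω)
  have hWle : ∀ ω, W ω ≤ b - a := by
    intro ω
    calc W ω ≤ ∫ _, (1 : ℝ) ∂ν :=
          integral_mono (hgint ω) (integrable_const 1)
            (fun z => (le_abs_self _).trans (hbd ω z))
      _ = b - a := by
          rw [integral_const, measureReal_def, hνuniv, ENNReal.toReal_ofReal (by linarith)]
          simp
  have hWint : Integrable W μ :=
    (integrable_const (b - a)).mono' measW.aestronglyMeasurable
      (Filter.Eventually.of_forall fun ω => by
        rw [Real.norm_eq_abs, abs_of_nonneg (hWnn ω)]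
        exact hWle ω)
  have step1 : ∫ ω, W ω ^ 2 ∂μ ≤ ∫ ω, (b - a) * W ω ∂μ := by
    refine integral_mono_of_nonneg (Filter.Eventually.of_forall fun ω => sq_nonneg _)
      (hWint.const_mul _) (Filter.Eventually.of_forall fun ω => ?_)
    show W ω ^ 2 ≤ (b - a) * W ω
    nlinarith [mul_nonneg (sub_nonneg.2 (hWle ω)) (hWnn ω)]
  have step2 : ∫ ω, (b - a) * W ω ∂μ = (b - a) * ∫ ω, W ω ∂μ := MeasureTheory.integral_const_mul _ _
  have hprod : Integrable (Function.uncurry g) (μ.prod ν) :=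
    (integrable_const (1 : ℝ)).mono' hg.aestronglyMeasurable
      (Filter.Eventually.of_forall fun p => by rw [Real.norm_eq_abs]; exact hbd p.1 p.2)
  have step3 : ∫ ω, W ω ∂μ = ∫ z, (∫ ω, g ω z ∂μ) ∂ν := integral_integral_swap hprod
  have step4 : ∫ z, (∫ ω, g ω z ∂μ) ∂ν ≤ (b - a) * Cb := by
    have hmem : ∀ᵐ z ∂ν, z ∈ Set.Ioc a b := ae_restrict_mem measurableSet_Ioc
    calc ∫ z, (∫ ω, g ω z ∂μ) ∂ν ≤ ∫ _, Cb ∂ν := by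
          refine integral_mono_of_nonneg ?_ (integrable_const Cb) ?_
          · filter_upwards [hmem] with z hz
            exact integral_nonneg fun ω => h0 ω z hz
          · filter_upwards [hmem] with z hz
            exact hmean z hz
      _ = (b - a) * Cb := by
          rw [integral_const, measureReal_def, hνuniv, ENNReal.toReal_ofReal (by linarith), smul_eq_mul]
  calc ∫ ω, W ω ^ 2 ∂μ ≤ (b - a) * ∫ ω, W ω ∂μ := by rw [← step2]; exact step1
    _ ≤ (b - a) * ((b - a) * Cb) := by
        rw [step3]
        exact mul_le_mul_of_nonneg_left step4 (by linarith)

/-- Second-moment bound for the Knight remainder: if the CDF of `U` is Lipschitz with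
constant `C_f` (bounded density), then `E[W(δ)²] ≤ C_f |δ|³` where
`W(δ) = ∫_0^δ (1{U ≤ z} − 1{U ≤ 0}) dz`. -/
theorem knight_remainder_second_moment
    {Ω : Type*} [MeasurableSpace Ω] (μ : Measure Ω) [IsProbabilityMeasure μ]
    (U : Ω → ℝ) (hU : Measurable U) (Cf : ℝ) (hCf : 0 ≤ Cf)
    (hLip : ∀ s t : ℝ, |(μ {ω | U ω ≤ t}).toReal - (μ {ω | U ω ≤ s}).toReal| ≤ Cf * |t - s|)
    (δ : ℝ) :
    (∫ ω, (∫ z in (0:ℝ)..δ,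
        ((if U ω ≤ z then (1:ℝ) else 0) - (if U ω ≤ 0 then (1:ℝ) else 0))) ^ 2 ∂μ)
      ≤ Cf * |δ| ^ 3 := by
  set F : ℝ → ℝ := fun s => (μ {ω | U ω ≤ s}).toReal with hF
  set f : Ω → ℝ → ℝ := fun ω z =>
    (if U ω ≤ z then (1:ℝ) else 0) - (if U ω ≤ 0 then (1:ℝ) else 0) with hf
  have hsetm : ∀ z : ℝ, MeasurableSet {ω | U ω ≤ z} := fun z => hU measurableSet_Iic
  have hfm : Measurable (Function.uncurry f) := by
    have h1 : MeasurableSet {p : Ω × ℝ | U p.1 ≤ p.2} :=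
      measurableSet_le (hU.comp measurable_fst) measurable_snd
    have h2 : MeasurableSet {p : Ω × ℝ | U p.1 ≤ 0} :=
      (hsetm 0).preimage measurable_fst
    exact (Measurable.ite h1 measurable_const measurable_const).sub
      (Measurable.ite h2 measurable_const measurable_const)
  have hbd : ∀ ω z, |f ω z| ≤ 1 := by
    intro ω z; simp only [hf]; split_ifs <;> norm_num
  have hindint : ∀ z : ℝ, Integrable (fun ω => if U ω ≤ z then (1:ℝ) else 0) μ := by
    intro z
    refine (integrable_const (1 : ℝ)).mono'
      ((Measurable.ite (hsetm z) measurable_const measurable_const).aestronglyMeasurable)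
      (Filter.Eventually.of_forall fun ω => ?_)
    split_ifs <;> simp
  have hindval : ∀ z : ℝ, ∫ ω, (if U ω ≤ z then (1:ℝ) else 0) ∂μ = F z := by
    intro z
    have : (fun ω => if U ω ≤ z then (1:ℝ) else 0)
        = Set.indicator {ω | U ω ≤ z} (1 : Ω → ℝ) := by
      ext ω; by_cases h : U ω ≤ z <;> simp [Set.indicator_apply, h]
    rw [this, integral_indicator_one (hsetm z), measureReal_def]
  have hmeanval : ∀ z : ℝ, ∫ ω, f ω z ∂μ = F z - F 0 := by
    intro z
    rw [hf]
    rw [integral_sub (hindint z) (hindint 0), hindval z, hindval 0]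
  rcases le_or_gt 0 δ with hδ | hδ
  · have hmean : ∀ z ∈ Set.Ioc (0:ℝ) δ, ∫ ω, f ω z ∂μ ≤ Cf * δ := by
      intro z hz
      rw [hmeanval z]
      calc F z - F 0 ≤ |F z - F 0| := le_abs_self _
        _ ≤ Cf * |z - 0| := hLip 0 z
        _ ≤ Cf * δ := by
            rw [sub_zero, abs_of_pos hz.1]
            exact mul_le_mul_of_nonneg_left hz.2 hCf
    have h0 : ∀ ω, ∀ z ∈ Set.Ioc (0:ℝ) δ, 0 ≤ f ω z := by
      intro ω z hz
      simp only [hf]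
      by_cases h2 : U ω ≤ 0
      · have h1 : U ω ≤ z := h2.trans hz.1.le
        simp [h1, h2]
      · simp only [h2, if_false, sub_zero]
        split_ifs <;> norm_num
    have hkey := knight_aux μ f hfm 0 δ hδ hbd h0 (Cf * δ) (mul_nonneg hCf hδ) hmean
    simp only [intervalIntegral.integral_of_le hδ]
    calc ∫ ω, (∫ z in Set.Ioc (0:ℝ) δ, f ω z) ^ 2 ∂μ
        ≤ (δ - 0) * ((δ - 0) * (Cf * δ)) := hkey
      _ = Cf * |δ| ^ 3 := by rw [abs_of_nonneg hδ]; ring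
  · have hδ' : δ ≤ 0 := hδ.le
    set g : Ω → ℝ → ℝ := fun ω z => -(f ω z) with hg
    have hgm : Measurable (Function.uncurry g) := hfm.neg
    have hgbd : ∀ ω z, |g ω z| ≤ 1 := fun ω z => by rw [hg]; simpa using hbd ω z
    have h0 : ∀ ω, ∀ z ∈ Set.Ioc δ (0:ℝ), 0 ≤ g ω z := by
      intro ω z hz
      simp only [hg, hf, neg_sub]
      by_cases h2 : U ω ≤ z
      · have h1 : U ω ≤ 0 := h2.trans hz.2
        simp [h1, h2]
      · simp only [h2, if_false, sub_zero]
        split_ifs <;> norm_num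
    have hmean : ∀ z ∈ Set.Ioc δ (0:ℝ), ∫ ω, g ω z ∂μ ≤ Cf * (-δ) := by
      intro z hz
      have : ∫ ω, g ω z ∂μ = -(F z - F 0) := by
        rw [hg]
        rw [integral_neg, hmeanval z]
      rw [this]
      calc -(F z - F 0) ≤ |F z - F 0| := neg_le_abs _
        _ ≤ Cf * |z - 0| := hLip 0 z
        _ ≤ Cf * (-δ) := by
            rw [sub_zero]
            refine mul_le_mul_of_nonneg_left ?_ hCf
            rw [abs_le]; constructor <;> linarith [hz.1, hz.2]
    have hkey := knight_aux μ g hgm δ 0 hδ' hgbd h0 (Cf * (-δ))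
      (mul_nonneg hCf (by linarith)) hmean
    simp only [hg, integral_neg, neg_sq] at hkey
    simp only [intervalIntegral.integral_of_ge hδ', neg_sq]
    calc ∫ ω, (∫ z in Set.Ioc δ (0:ℝ), f ω z) ^ 2 ∂μ
        ≤ (0 - δ) * ((0 - δ) * (Cf * (-δ))) := hkey
      _ = Cf * |δ| ^ 3 := by rw [abs_of_neg hδ]; ring
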